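/- Fix a basis v₁,…,vₙ of V over a non-Archimedean valued field 𝕂. For m ∈ ℝⁿ define the diagonalizable ultrametric norm η_m(Σ xᵢvᵢ) = max_i e^{mᵢ}|xᵢ|. Then the Goldman–Iwahori distance satisfies d(η_m, η_{m'}) = ‖m − m'‖_∞ for all m, m' ∈ ℝⁿ. -/

import Mathlib

noncomputable def GIdist {V : Type*} [Zero V] (η η' : V → ℝ) : ℝ :=
  ⨆ v : {v : V // v ≠ 0}, |Real.log (η v.1 / η' v.1)|

/-- For the diagonalizable ultrametric norms `η_m (Σ xᵢ vᵢ) = max_i e^{m i} |xᵢ|`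
associated to a fixed basis, the Goldman–Iwahori distance satisfies
`d(η_m, η_{m'}) = ‖m - m'‖_∞`. -/
theorem GIdist_diagonalizable_norms
    {𝕂 : Type*} [NormedField 𝕂] [IsUltrametricDist 𝕂]
    {V : Type*} [AddCommGroup V] [Module 𝕂 V] {n : ℕ}
    (b : Module.Basis (Fin n) 𝕂 V) (m m' : Fin n → ℝ) :
    GIdist (fun v => ⨆ i, Real.exp (m i) * ‖b.repr v i‖)
      (fun v => ⨆ i, Real.exp (m' i) * ‖b.repr v i‖) = ‖m - m'‖ := by
  rcases Nat.eq_zero_or_pos n with hn | hn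
  · subst hn
    have hsub : Subsingleton V := b.repr.toEquiv.subsingleton
    have h1 : IsEmpty {v : V // v ≠ 0} := by
      constructor; rintro ⟨v, hv⟩
      exact hv (Subsingleton.elim v 0)
    have h2 : (m - m') = 0 := Subsingleton.elim _ _
    rw [GIdist, Real.iSup_of_isEmpty, h2, norm_zero]
  haveI : Nonempty (Fin n) := ⟨⟨0, hn⟩⟩
  -- key comparison inequality
  have key : ∀ (a a' : Fin n → ℝ) (v : V),
      (⨆ i, Real.exp (a i) * ‖b.repr v i‖) ≤
        Real.exp ‖a - a'‖ * ⨆ i, Real.exp (a' i) * ‖b.repr v i‖ := by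
    intro a a' v
    apply ciSup_le
    intro i
    have h1 : Real.exp (a i) * ‖b.repr v i‖
        = Real.exp (a i - a' i) * (Real.exp (a' i) * ‖b.repr v i‖) := by
      rw [← mul_assoc, ← Real.exp_add]; ring_nf
    rw [h1]
    have h2 : Real.exp (a i - a' i) ≤ Real.exp ‖a - a'‖ := by
      apply Real.exp_le_exp.2
      calc a i - a' i ≤ |a i - a' i| := le_abs_self _
        _ = ‖(a - a') i‖ := by simp [Real.norm_eq_abs]
        _ ≤ ‖a - a'‖ := norm_le_pi_norm _ i
    have h3 : Real.exp (a' i) * ‖b.repr v i‖ ≤ ⨆ i, Real.exp (a' i) * ‖b.repr v i‖ :=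
      le_ciSup (f := fun i => Real.exp (a' i) * ‖b.repr v i‖)
        (Set.Finite.bddAbove (Set.finite_range _)) i
    exact mul_le_mul h2 h3 (by positivity) (Real.exp_pos _).le
  -- positivity of the norms on nonzero vectors
  have pos : ∀ (a : Fin n → ℝ) (v : V), v ≠ 0 →
      0 < ⨆ i, Real.exp (a i) * ‖b.repr v i‖ := by
    intro a v hv
    obtain ⟨i, hi⟩ : ∃ i, b.repr v i ≠ 0 := by
      by_contra h
      push_neg at h
      exact hv (b.repr.map_eq_zero_iff.1 (Finsupp.ext h))
    calc (0:ℝ) < Real.exp (a i) * ‖b.repr v i‖ :=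
        mul_pos (Real.exp_pos _) (norm_pos_iff.2 hi)
      _ ≤ _ := le_ciSup (f := fun i => Real.exp (a i) * ‖b.repr v i‖)
        (Set.Finite.bddAbove (Set.finite_range _)) i
  -- per-element bound
  have bound : ∀ v : {v : V // v ≠ 0},
      |Real.log ((⨆ i, Real.exp (m i) * ‖b.repr v.1 i‖) /
        (⨆ i, Real.exp (m' i) * ‖b.repr v.1 i‖))| ≤ ‖m - m'‖ := by
    rintro ⟨v, hv⟩
    have hx := pos m v hv
    have hy := pos m' v hv
    have hlog : ∀ (a a' : Fin n → ℝ), 0 < (⨆ i, Real.exp (a i) * ‖b.repr v i‖) →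
        0 < (⨆ i, Real.exp (a' i) * ‖b.repr v i‖) →
        Real.log (⨆ i, Real.exp (a i) * ‖b.repr v i‖)
          ≤ ‖a - a'‖ + Real.log (⨆ i, Real.exp (a' i) * ‖b.repr v i‖) := by
      intro a a' ha ha'
      calc Real.log (⨆ i, Real.exp (a i) * ‖b.repr v i‖)
          ≤ Real.log (Real.exp ‖a - a'‖ * ⨆ i, Real.exp (a' i) * ‖b.repr v i‖) :=
            Real.log_le_log ha (key a a' v)
        _ = ‖a - a'‖ + Real.log (⨆ i, Real.exp (a' i) * ‖b.repr v i‖) := by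
            rw [Real.log_mul (Real.exp_pos _).ne' ha'.ne', Real.log_exp]
    rw [Real.log_div hx.ne' hy.ne', abs_sub_le_iff]
    constructor
    · linarith [hlog m m' hx hy]
    · have := hlog m' m hy hx
      rw [norm_sub_rev] at this
      linarith
  have hne : Nonempty {v : V // v ≠ 0} := ⟨⟨b ⟨0, hn⟩, b.ne_zero _⟩⟩
  apply le_antisymm
  · exact ciSup_le bound
  · -- lower bound: evaluate at a basis vector realizing the max
    obtain ⟨i₀, hi₀⟩ := Finite.exists_max (fun i => |m i - m' i|)
    have comp : ∀ (a : Fin n → ℝ),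
        (⨆ i, Real.exp (a i) * ‖b.repr (b i₀) i‖) = Real.exp (a i₀) := by
      intro a
      have hr : b.repr (b i₀) = Finsupp.single i₀ 1 := b.repr_self i₀
      apply le_antisymm
      · apply ciSup_le; intro i
        rw [hr]
        rcases eq_or_ne i i₀ with h | h
        · subst h; simp
        · simp only [Finsupp.single_apply, if_neg (Ne.symm h), norm_zero, mul_zero]
          positivity
      · have := le_ciSup (Set.Finite.bddAbove
          (Set.finite_range fun i => Real.exp (a i) * ‖b.repr (b i₀) i‖)) i₀
        simpa [hr] using this
    have hval : |Real.log ((⨆ i, Real.exp (m i) * ‖b.repr (b i₀) i‖) /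
        (⨆ i, Real.exp (m' i) * ‖b.repr (b i₀) i‖))| = |m i₀ - m' i₀| := by
      rw [comp m, comp m', ← Real.exp_sub, Real.log_exp]
    have hnorm : ‖m - m'‖ ≤ |m i₀ - m' i₀| := by
      apply pi_norm_le_iff_of_nonneg (abs_nonneg _) |>.2
      intro i
      simpa [Real.norm_eq_abs] using hi₀ i
    calc ‖m - m'‖ ≤ |m i₀ - m' i₀| := hnorm
      _ ≤ GIdist (fun v => ⨆ i, Real.exp (m i) * ‖b.repr v i‖)
          (fun v => ⨆ i, Real.exp (m' i) * ‖b.repr v i‖) := by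
          rw [← hval]
          exact le_ciSup ⟨‖m - m'‖, Set.forall_mem_range.2 bound⟩
            (⟨b i₀, b.ne_zero i₀⟩ : {v : V // v ≠ 0})
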